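/- Let G(∘) and G(∗) be two group structures on a finite set G of cardinality n, and suppose a∘b ≠ a∗b for some a, b ∈ G. Then d(a) + d(b) + d(a∘b) ≥ n, where d(g) = |{h ∈ G : g∘h ≠ g∗h}|. -/
import Mathlib

private lemma grp_cancel {G : Type*} (g : Group G) (x y h : G)
    (hxy : g.mul x h = g.mul y h) : x = y := by
  letI := g; exact mul_right_cancel (a := x) (b := h) (c := y) hxy

private lemma grp_cancel_left {G : Type*} (g : Group G) (x y h : G)
    (hxy : g.mul h x = g.mul h y) : x = y := by
  letI := g; exact mul_left_cancel (a := h) hxy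

private lemma grp_assoc {G : Type*} (g : Group G) (x y z : G) :
    g.mul (g.mul x y) z = g.mul x (g.mul y z) := by
  letI := g; exact mul_assoc x y z

theorem row_distance_bound {G : Type*} [Fintype G] [DecidableEq G]
    (s t : Group G)
    (d : G → ℕ)
    (hd : ∀ g, d g = (Finset.univ.filter fun h : G => s.mul g h ≠ t.mul g h).card)
    (a b : G) (hab : s.mul a b ≠ t.mul a b) :
    Fintype.card G ≤ d a + d b + d (s.mul a b) := by
  classical
  have D : ∀ g : G, Finset G := fun g => Finset.univ.filter fun h : G => s.mul g h ≠ t.mul g h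
  set A : Finset G := Finset.univ.filter (fun h : G => s.mul a h ≠ t.mul a h) with hA
  set B : Finset G := Finset.univ.filter (fun h : G => s.mul b h ≠ t.mul b h) with hB
  set C : Finset G := Finset.univ.filter (fun h : G => s.mul (s.mul a b) h ≠ t.mul (s.mul a b) h) with hC
  have hmap : ∀ h ∈ (Finset.univ : Finset G) \ (B ∪ C), s.mul b h ∈ A := by
    intro h hh
    rw [Finset.mem_sdiff, Finset.mem_union] at hh
    obtain ⟨-, hh⟩ := hh
    push_neg at hh
    obtain ⟨hb', hc'⟩ := hh
    rw [hB, Finset.mem_filter] at hb'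
    rw [hC, Finset.mem_filter] at hc'
    have hb : s.mul b h = t.mul b h := by
      by_contra hne; exact hb' ⟨Finset.mem_univ _, hne⟩
    have hcc : s.mul (s.mul a b) h = t.mul (s.mul a b) h := by
      by_contra hne; exact hc' ⟨Finset.mem_univ _, hne⟩
    rw [hA, Finset.mem_filter]
    refine ⟨Finset.mem_univ _, ?_⟩
    intro heq
    apply hab
    apply grp_cancel t _ _ h
    calc t.mul (s.mul a b) h = s.mul (s.mul a b) h := hcc.symm
      _ = s.mul a (s.mul b h) := grp_assoc s a b h
      _ = t.mul a (t.mul b h) := by rw [heq, hb]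
      _ = t.mul (t.mul a b) h := (grp_assoc t a b h).symm
  have h1 : ((Finset.univ : Finset G) \ (B ∪ C)).card ≤ A.card :=
    Finset.card_le_card_of_injOn _ hmap
      (fun h₁ _ h₂ _ he => grp_cancel_left s h₁ h₂ b he)
  have h2 : (Finset.univ : Finset G).card ≤ (B ∪ C).card +
      ((Finset.univ : Finset G) \ (B ∪ C)).card := by
    rw [Finset.card_sdiff_of_subset (Finset.subset_univ _)]
    have := Finset.card_le_univ (B ∪ C)
    omega
  have h3 : (B ∪ C).card ≤ B.card + C.card := Finset.card_union_le _ _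
  rw [hd a, hd b, hd (s.mul a b), ← hA, ← hB, ← hC]
  have h4 : (Finset.univ : Finset G).card = Fintype.card G := rfl
  omega
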